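/- Let a, b, q, r be non-negative integers with q, r ≥ 2 and a + b ≥ 1. If two graphs H and H' are q-Ramsey-equivalent and also r-Ramsey-equivalent, then H and H' are (aq + br)-Ramsey-equivalent. -/

import Mathlib

open SimpleGraph

/-- The colouring `c` contains a copy of `H` in `G` all of whose edges have colour `i`. -/
def HasMonoCopyColor {V W : Type*} (G : SimpleGraph V) (H : SimpleGraph W) {q : ℕ}
    (c : Sym2 V → Fin q) (i : Fin q) : Prop :=
  ∃ f : W ↪ V, ∀ a b, H.Adj a b → G.Adj (f a) (f b) ∧ c s(f a, f b) = i

/-- The colouring `c` contains a monochromatic copy of `H` in `G`. -/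
def HasMonoCopy {V W : Type*} (G : SimpleGraph V) (H : SimpleGraph W) {q : ℕ}
    (c : Sym2 V → Fin q) : Prop :=
  ∃ i : Fin q, HasMonoCopyColor G H c i

/-- `G` is `q`-Ramsey for `H`: every `q`-colouring of the edges of `G` contains a
monochromatic copy of `H`. -/
def IsRamsey (q : ℕ) {V W : Type*} (G : SimpleGraph V) (H : SimpleGraph W) : Prop :=
  ∀ c : Sym2 V → Fin q, HasMonoCopy G H c

/-- `H` and `H'` are `q`-Ramsey-equivalent: a (finite) graph is `q`-Ramsey for `H`
iff it is `q`-Ramsey for `H'`. -/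
def RamseyEquiv (q : ℕ) {W W' : Type*} (H : SimpleGraph W) (H' : SimpleGraph W') : Prop :=
  ∀ (V : Type) [Fintype V] (G : SimpleGraph V), IsRamsey q G H ↔ IsRamsey q G H'

lemma RamseyEquiv.symm' {q : ℕ} {W W' : Type*} {H : SimpleGraph W} {H' : SimpleGraph W'}
    (h : RamseyEquiv q H H') : RamseyEquiv q H' H := fun V _ G => (h V G).symm

/-- Subgraph of `G` consisting of the edges satisfying `P`. -/
private def subG {V : Type} (G : SimpleGraph V) (P : Sym2 V → Prop) : SimpleGraph V where
  Adj x y := G.Adj x y ∧ P s(x, y)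
  symm := ⟨fun x y ⟨h1, h2⟩ => ⟨h1.symm, by rwa [Sym2.eq_swap]⟩⟩
  loopless := ⟨fun x ⟨h1, _⟩ => G.irrefl h1⟩

private lemma key {W W' : Type*} (H : SimpleGraph W) (H' : SimpleGraph W')
    {p r : ℕ} (hp : 1 ≤ p) (hr : 1 ≤ r)
    (hpe : RamseyEquiv p H H') (hre : RamseyEquiv r H H')
    (V : Type) [Fintype V] (G : SimpleGraph V)
    (hR : IsRamsey (p + r) G H) : IsRamsey (p + r) G H' := by
  intro c
  by_contra hno
  set G1 := subG G (fun e => (c e).val < p) with hG1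
  set G2 := subG G (fun e => p ≤ (c e).val) with hG2
  -- G1 is not p-Ramsey for H'
  have h1 : ¬ IsRamsey p G1 H' := by
    intro h
    obtain ⟨i, f, hf⟩ := h (fun e => if h : (c e).val < p then ⟨(c e).val, h⟩ else ⟨0, hp⟩)
    exact hno ⟨Fin.castLE (Nat.le_add_right p r) i, f, fun a b hab => by
      obtain ⟨⟨hadj, hlt⟩, hc⟩ := hf a b hab
      simp only [dif_pos hlt] at hc
      exact ⟨hadj, Fin.ext (by simpa using congrArg Fin.val hc)⟩⟩
  have h2 : ¬ IsRamsey r G2 H' := by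
    intro h
    obtain ⟨j, f, hf⟩ := h (fun e => if h : p ≤ (c e).val then
      ⟨(c e).val - p, by have := (c e).isLt; omega⟩ else ⟨0, hr⟩)
    exact hno ⟨Fin.natAdd p j, f, fun a b hab => by
      obtain ⟨⟨hadj, hge⟩, hc⟩ := hf a b hab
      simp only [dif_pos hge] at hc
      have := congrArg Fin.val hc
      simp only at this
      exact ⟨hadj, Fin.ext (by simp [Fin.natAdd]; omega)⟩⟩
  have h1' : ¬ IsRamsey p G1 H := fun h => h1 ((hpe V G1).mp h)
  have h2' : ¬ IsRamsey r G2 H := fun h => h2 ((hre V G2).mp h)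
  obtain ⟨d1, hd1⟩ := not_forall.mp h1'
  obtain ⟨d2, hd2⟩ := not_forall.mp h2'
  -- combine d1 and d2 into a (p+r)-colouring with no mono H, contradicting hR
  set d : Sym2 V → Fin (p + r) := fun e =>
    if (c e).val < p then Fin.castLE (Nat.le_add_right p r) (d1 e) else Fin.natAdd p (d2 e)
    with hd
  obtain ⟨i, f, hf⟩ := hR d
  by_cases hi : i.val < p
  · apply hd1
    refine ⟨⟨i.val, hi⟩, f, fun a b hab => ?_⟩
    obtain ⟨hadj, hcol⟩ := hf a b hab
    have hval := congrArg Fin.val hcol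
    have hclt : (c s(f a, f b)).val < p := by
      by_contra hge
      simp only [hd] at hval
      simp only [if_neg hge] at hval
      simp [Fin.natAdd] at hval
      omega
    refine ⟨⟨hadj, hclt⟩, ?_⟩
    simp only [hd] at hval
    simp only [if_pos hclt] at hval
    exact Fin.ext (by simpa using hval)
  · apply hd2
    refine ⟨⟨i.val - p, by have := i.isLt; omega⟩, f, fun a b hab => ?_⟩
    obtain ⟨hadj, hcol⟩ := hf a b hab
    have hval := congrArg Fin.val hcol
    have hcge : p ≤ (c s(f a, f b)).val := by
      by_contra hlt
      simp only [hd] at hval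
      simp only [if_pos (not_le.mp hlt)] at hval
      have := (d1 s(f a, f b)).isLt
      simp at hval
      omega
    refine ⟨⟨hadj, hcge⟩, ?_⟩
    simp only [hd] at hval
    simp only [if_neg (not_lt.mpr hcge)] at hval
    simp [Fin.natAdd] at hval
    exact Fin.ext (by simp; omega)

private lemma key_equiv {W W' : Type*} {H : SimpleGraph W} {H' : SimpleGraph W'}
    {p r : ℕ} (hp : 1 ≤ p) (hr : 1 ≤ r)
    (hpe : RamseyEquiv p H H') (hre : RamseyEquiv r H H') :
    RamseyEquiv (p + r) H H' := fun V _ G =>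
  ⟨key H H' hp hr hpe hre V G, key H' H hp hr hpe.symm' hre.symm' V G⟩

private lemma mul_equiv {W W' : Type*} {H : SimpleGraph W} {H' : SimpleGraph W'}
    {q : ℕ} (hq : 1 ≤ q) (hqe : RamseyEquiv q H H') :
    ∀ n, 1 ≤ n → RamseyEquiv (n * q) H H' := by
  intro n hn
  induction n with
  | zero => omega
  | succ m ih =>
    rcases Nat.eq_zero_or_pos m with hm | hm
    · subst hm; simpa using hqe
    · have h1 := ih hm
      have : (m + 1) * q = m * q + q := by ring
      rw [this]
      exact key_equiv (Nat.mul_pos hm hq) hq h1 hqe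

/-- If `H` and `H'` are `q`-Ramsey-equivalent and `r`-Ramsey-equivalent,
with `q, r ≥ 2` and `a + b ≥ 1`, then they are `(a*q + b*r)`-Ramsey-equivalent. -/
theorem stmt4 {W W' : Type} [Fintype W] [Fintype W']
    (H : SimpleGraph W) (H' : SimpleGraph W')
    (a b q r : ℕ) (hq : 2 ≤ q) (hr : 2 ≤ r) (hab : 1 ≤ a + b)
    (hq_equiv : RamseyEquiv q H H') (hr_equiv : RamseyEquiv r H H') :
    RamseyEquiv (a * q + b * r) H H' := by
  rcases Nat.eq_zero_or_pos a with ha | ha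
  · subst ha
    have hb : 1 ≤ b := by omega
    simpa using mul_equiv (by omega) hr_equiv b hb
  · rcases Nat.eq_zero_or_pos b with hb | hb
    · subst hb
      simpa using mul_equiv (by omega) hq_equiv a ha
    · exact key_equiv (Nat.mul_pos ha (by omega)) (Nat.mul_pos hb (by omega))
        (mul_equiv (by omega) hq_equiv a ha) (mul_equiv (by omega) hr_equiv b hb)
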